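/- Let C ⊆ ℝ² be a strict closed convex cone with nonempty interior and let g ∈ GL(2,ℤ) preserve C. Then there exist vectors x₁, x₂ ∈ C lying on the frontier of C, linearly independent over ℝ, and real numbers α > 0 and β > 0 with α·β = 1, such that g²·x₁ = α·x₁ and g²·x₂ = β·x₂. -/

import Mathlib

open Matrix

private lemma cone_line_bddAbove (C : Set (Fin 2 → ℝ)) (hclosed : IsClosed C)
    (hcone : ∀ v ∈ C, ∀ t : ℝ, 0 ≤ t → t • v ∈ C) (u w : Fin 2 → ℝ) (hw : w ∉ C) :
    BddAbove {t : ℝ | u + t • w ∈ C} := by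
  by_contra hb
  rw [not_bddAbove_iff] at hb
  choose f hfS hfn using fun n : ℕ => hb n
  have hfpos : ∀ n, (0:ℝ) < f n := fun n => lt_of_le_of_lt (Nat.cast_nonneg n) (hfn n)
  have hmem : ∀ n, (f n)⁻¹ • u + w ∈ C := by
    intro n
    have h1 := hcone _ (hfS n) (f n)⁻¹ (inv_nonneg.mpr (hfpos n).le)
    have : (f n)⁻¹ • (u + f n • w) = (f n)⁻¹ • u + w := by
      rw [smul_add, smul_smul, inv_mul_cancel₀ (hfpos n).ne', one_smul]
    rwa [this] at h1
  have hf_top : Filter.Tendsto f Filter.atTop Filter.atTop :=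
    Filter.tendsto_atTop_mono (fun n => (hfn n).le) tendsto_natCast_atTop_atTop
  have hinv : Filter.Tendsto (fun n => (f n)⁻¹) Filter.atTop (nhds (0:ℝ)) :=
    tendsto_inv_atTop_zero.comp hf_top
  have hlim : Filter.Tendsto (fun n => (f n)⁻¹ • u + w) Filter.atTop (nhds w) := by
    have := (hinv.smul_const u).add_const w
    simpa using this
  exact hw (hclosed.mem_of_tendsto hlim (Filter.Eventually.of_forall hmem))

private lemma det_eq_mul_of_eigen {N : Matrix (Fin 2) (Fin 2) ℝ} {x₁ x₂ : Fin 2 → ℝ}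
    (hind : LinearIndependent ℝ ![x₁, x₂]) {α β : ℝ}
    (h₁ : N.mulVec x₁ = α • x₁) (h₂ : N.mulVec x₂ = β • x₂) : N.det = α * β := by
  set P : Matrix (Fin 2) (Fin 2) ℝ := Matrix.of ![x₁, x₂] with hP
  have hPunit : IsUnit P := by
    rw [← Matrix.linearIndependent_rows_iff_isUnit]
    exact hind
  have hPdet : P.det ≠ 0 := by
    have := (Matrix.isUnit_iff_isUnit_det P).mp hPunit
    exact this.ne_zero
  have key : P * Nᵀ = Matrix.diagonal ![α, β] * P := by
    ext i j
    have e₁ := congrFun h₁ j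
    have e₂ := congrFun h₂ j
    simp [Matrix.mulVec, dotProduct, Fin.sum_univ_two] at e₁ e₂
    fin_cases i <;>
      simp [hP, Matrix.mul_apply, Matrix.diagonal, Fin.sum_univ_two, Matrix.transpose] <;>
      linarith [e₁, e₂]
  have := congrArg Matrix.det key
  rw [Matrix.det_mul, Matrix.det_mul, Matrix.det_transpose, Matrix.det_diagonal,
    Fin.prod_univ_two] at this
  simp only [Matrix.cons_val_zero, Matrix.cons_val_one, Matrix.head_cons] at this
  have := mul_left_cancel₀ hPdet (by linarith [this] : P.det * N.det = P.det * (α * β))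
  exact this

set_option maxHeartbeats 1000000 in
theorem cone_boundary_eigenvectors (C : Set (Fin 2 → ℝ))
    (hclosed : IsClosed C) (hconv : Convex ℝ C)
    (hcone : ∀ v ∈ C, ∀ t : ℝ, 0 ≤ t → t • v ∈ C)
    (hstrict : ∀ v : Fin 2 → ℝ, v ∈ C → -v ∈ C → v = 0)
    (hint : (interior C).Nonempty)
    (g : Matrix (Fin 2) (Fin 2) ℤ) (hg : g.det = 1 ∨ g.det = -1)
    (hpres : (fun v : Fin 2 → ℝ => (g.map (Int.cast : ℤ → ℝ)).mulVec v) '' C = C) :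
    ∃ x₁ x₂ : Fin 2 → ℝ, x₁ ∈ C ∧ x₂ ∈ C ∧ x₁ ∈ frontier C ∧ x₂ ∈ frontier C ∧
      LinearIndependent ℝ ![x₁, x₂] ∧
      ∃ α β : ℝ, 0 < α ∧ 0 < β ∧ α * β = 1 ∧
        ((g ^ 2).map (Int.cast : ℤ → ℝ)).mulVec x₁ = α • x₁ ∧
        ((g ^ 2).map (Int.cast : ℤ → ℝ)).mulVec x₂ = β • x₂ := by
  obtain ⟨u, hu⟩ := hint
  have huC : u ∈ C := interior_subset hu
  have h0C : (0 : Fin 2 → ℝ) ∈ C := by simpa using hcone u huC 0 le_rfl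
  -- addition closedness
  have hadd : ∀ v ∈ C, ∀ x ∈ C, v + x ∈ C := by
    intro v hv x hx
    have hmid := hconv hv hx (by norm_num : (0:ℝ) ≤ 1/2) (by norm_num : (0:ℝ) ≤ 1/2)
      (by norm_num : (1/2:ℝ) + 1/2 = 1)
    have := hcone _ hmid 2 (by norm_num)
    have heq : (2:ℝ) • ((1/2 : ℝ) • v + (1/2 : ℝ) • x) = v + x := by module
    rwa [heq] at this
  -- 0 is not in the interior
  have h0ni : (0 : Fin 2 → ℝ) ∉ interior C := by
    intro h0
    set z₀ : Fin 2 → ℝ := fun _ => 1 with hz₀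
    have hcont : Continuous (fun t : ℝ => t • z₀) := continuous_id.smul continuous_const
    have hpre : (fun t : ℝ => t • z₀) ⁻¹' C ∈ nhds (0:ℝ) := by
      apply (hcont.continuousAt (x := (0:ℝ))).preimage_mem_nhds
      simp only [zero_smul]
      exact mem_interior_iff_mem_nhds.mp h0
    obtain ⟨δ, hδ, hball⟩ := Metric.mem_nhds_iff.mp hpre
    have hmem : ∀ t : ℝ, |t| < δ → t • z₀ ∈ C := by
      intro t ht
      exact hball (by simpa [Real.dist_eq] using ht)
    have h1 : (δ/2) • z₀ ∈ C := hmem _ (by rw [abs_of_pos (by linarith)]; linarith)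
    have h2 : -((δ/2) • z₀) ∈ C := by
      have := hmem (-(δ/2)) (by rw [abs_neg, abs_of_pos (by linarith)]; linarith)
      rwa [neg_smul] at this
    have := congrFun (hstrict _ h1 h2) 0
    simp [hz₀] at this
    linarith
  have hune : u ≠ 0 := fun h => h0ni (h ▸ hu)
  -- existence of w with w ∉ C, -w ∉ C
  obtain ⟨w, hwC, hwC'⟩ : ∃ w : Fin 2 → ℝ, w ∉ C ∧ -w ∉ C := by
    by_contra hc
    push_neg at hc
    have hconn : IsConnected ({(0 : Fin 2 → ℝ)}ᶜ : Set (Fin 2 → ℝ)) :=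
      isConnected_compl_singleton_of_one_lt_rank (by simp) 0
    have := (isPreconnected_closed_iff.mp hconn.isPreconnected) C {x | -x ∈ C}
      hclosed (hclosed.preimage continuous_neg) ?_ ?_ ?_
    · obtain ⟨x, hx0, hxC, hxC'⟩ := this
      exact hx0 (hstrict x hxC hxC')
    · intro x _
      by_cases h : x ∈ C
      · exact Or.inl h
      · exact Or.inr (hc x h)
    · exact ⟨u, by simpa using hune, huC⟩
    · refine ⟨-u, ?_, by simpa using huC⟩
      simpa using hune
  have hwne : w ≠ 0 := fun h => hwC (h ▸ h0C)
  -- u, w independent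
  have huw : LinearIndependent ℝ ![u, w] := by
    rw [LinearIndependent.pair_iff' hune]
    intro a ha
    rcases lt_trichotomy a 0 with h | h | h
    · apply hwC'
      have := hcone u huC (-a) (by linarith)
      rwa [show (-a) • u = -w by rw [← ha]; module] at this
    · exact hwne (by rw [← ha, h, zero_smul])
    · exact hwC (by rw [← ha]; exact hcone u huC a h.le)
  set S : Set ℝ := {t : ℝ | u + t • w ∈ C} with hS
  have hS0 : (0:ℝ) ∈ S := by simpa [hS] using huC
  have hSne : S.Nonempty := ⟨0, hS0⟩
  have hScl : IsClosed S := by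
    apply hclosed.preimage
    exact continuous_const.add (continuous_id.smul continuous_const)
  have hSbA : BddAbove S := cone_line_bddAbove C hclosed hcone u w hwC
  have hSbB : BddBelow S := by
    have := cone_line_bddAbove C hclosed hcone u (-w) hwC'
    obtain ⟨M, hM⟩ := this
    refine ⟨-M, fun t ht => ?_⟩
    have : -t ∈ {t : ℝ | u + t • (-w) ∈ C} := by
      show u + (-t) • (-w) ∈ C
      rw [neg_smul, smul_neg, neg_neg]
      exact ht
    have := hM this
    linarith
  set t₂ := sSup S with ht₂
  set t₁ := sInf S with ht₁
  have ht₂S : t₂ ∈ S := hScl.csSup_mem hSne hSbA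
  have ht₁S : t₁ ∈ S := hScl.csInf_mem hSne hSbB
  -- small ball around 0 inside S
  obtain ⟨ε, hε, hballS⟩ : ∃ ε > 0, ∀ t : ℝ, |t| < ε → t ∈ S := by
    have hcont : Continuous (fun t : ℝ => u + t • w) :=
      continuous_const.add (continuous_id.smul continuous_const)
    have hpre : (fun t : ℝ => u + t • w) ⁻¹' C ∈ nhds (0:ℝ) := by
      apply (hcont.continuousAt (x := (0:ℝ))).preimage_mem_nhds
      simp only [zero_smul, add_zero]
      exact mem_interior_iff_mem_nhds.mp hu
    obtain ⟨δ, hδ, hball⟩ := Metric.mem_nhds_iff.mp hpre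
    exact ⟨δ, hδ, fun t ht => hball (by simpa [Real.dist_eq] using ht)⟩
  have ht1neg : t₁ < 0 := lt_of_le_of_lt (csInf_le hSbB (hballS (-(ε/2)) (by rw [abs_neg, abs_of_pos (by linarith)]; linarith))) (by linarith)
  have ht2pos : 0 < t₂ := lt_of_lt_of_le (by linarith) (le_csSup hSbA (hballS (ε/2) (by rw [abs_of_pos (by linarith)]; linarith)))
  have ht12 : t₁ < t₂ := ht1neg.trans ht2pos
  set x₁ : Fin 2 → ℝ := u + t₁ • w with hx₁def
  set x₂ : Fin 2 → ℝ := u + t₂ • w with hx₂def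
  have hx₁C : x₁ ∈ C := ht₁S
  have hx₂C : x₂ ∈ C := ht₂S
  -- linear independence of x₁ x₂
  have huwp := LinearIndependent.pair_iff.mp huw
  have hx12 : LinearIndependent ℝ ![x₁, x₂] := by
    rw [LinearIndependent.pair_iff]
    intro s t hst
    have : (s + t) • u + (s * t₁ + t * t₂) • w = 0 := by
      rw [hx₁def, hx₂def] at hst; rw [← hst]; module
    obtain ⟨h1, h2⟩ := huwp _ _ this
    constructor <;> nlinarith
  -- the two key exclusion facts
  have star₁ : ∀ ε : ℝ, 0 < ε → (1+ε) • x₁ - ε • x₂ ∉ C := by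
    intro ε hε hmem
    have heq : (1+ε) • x₁ - ε • x₂ = u + (t₁ - ε * (t₂ - t₁)) • w := by
      rw [hx₁def, hx₂def]; module
    rw [heq] at hmem
    have : t₁ - ε * (t₂ - t₁) ∈ S := hmem
    have := csInf_le hSbB this
    nlinarith
  have star₂ : ∀ ε : ℝ, 0 < ε → (1+ε) • x₂ - ε • x₁ ∉ C := by
    intro ε hε hmem
    have heq : (1+ε) • x₂ - ε • x₁ = u + (t₂ + ε * (t₂ - t₁)) • w := by
      rw [hx₁def, hx₂def]; module
    rw [heq] at hmem
    have : t₂ + ε * (t₂ - t₁) ∈ S := hmem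
    have := le_csSup hSbA this
    nlinarith
  -- cone combinations in C
  have hK : ∀ a b : ℝ, 0 ≤ a → 0 ≤ b → a • x₁ + b • x₂ ∈ C := fun a b ha hb =>
    hadd _ (hcone _ hx₁C a ha) _ (hcone _ hx₂C b hb)
  have hx12p := LinearIndependent.pair_iff.mp hx12
  -- C consists of nonneg combinations
  have coordb : ∀ a b : ℝ, a • x₁ + b • x₂ ∈ C → 0 ≤ b := by
    intro a b hv
    by_contra hbneg
    push_neg at hbneg
    rcases le_or_gt a 0 with ha | ha
    · have hneg : -(a • x₁ + b • x₂) ∈ C := by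
        have := hK (-a) (-b) (by linarith) (by linarith)
        rwa [show (-a) • x₁ + (-b) • x₂ = -(a • x₁ + b • x₂) by module] at this
      have := hstrict _ hv hneg
      obtain ⟨h1, h2⟩ := hx12p a b this
      linarith
    · rcases le_or_gt (a + b) 0 with hab | hab
      · have hμ : (0:ℝ) ≤ -(a+b) := by linarith
        have hsum : a • x₁ + b • x₂ + (-(a+b)) • x₂ ∈ C :=
          hadd _ hv _ (hcone _ hx₂C _ hμ)
        have heq : a • x₁ + b • x₂ + (-(a+b)) • x₂ = (a * (t₁ - t₂)) • w := by
          rw [hx₁def, hx₂def]; module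
        rw [heq] at hsum
        have hcoef : a * (t₁ - t₂) < 0 := by nlinarith
        have := hcone _ hsum (-(a * (t₁ - t₂)))⁻¹ (inv_nonneg.mpr (by linarith))
        rw [smul_smul, show (-(a * (t₁ - t₂)))⁻¹ * (a * (t₁ - t₂)) = -1 by
          field_simp
          rw [div_self (sub_ne_zero.mpr ht12.ne)]] at this
        exact hwC' (by rwa [show (-1 : ℝ) • w = -w by module] at this)
      · set r := (a+b)⁻¹ with hr
        have hrpos : 0 < r := inv_pos.mpr hab
        have hrv : r • (a • x₁ + b • x₂) ∈ C := hcone _ hv r hrpos.le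
        have hepsilon : 0 < -(r*b) := by
          rw [neg_pos]; exact mul_neg_of_pos_of_neg hrpos hbneg
        have heq : r • (a • x₁ + b • x₂) = (1 + -(r*b)) • x₁ - (-(r*b)) • x₂ := by
          have hra : r * a = 1 + -(r * b) := by
            rw [hr]
            field_simp
            ring
          rw [smul_add, smul_smul, smul_smul, hra]
          module
        rw [heq] at hrv
        exact star₁ _ hepsilon hrv
  have coorda : ∀ a b : ℝ, a • x₁ + b • x₂ ∈ C → 0 ≤ a := by
    intro a b hv
    by_contra haneg
    push_neg at haneg
    rcases le_or_gt b 0 with hb | hb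
    · have hneg : -(a • x₁ + b • x₂) ∈ C := by
        have := hK (-a) (-b) (by linarith) (by linarith)
        rwa [show (-a) • x₁ + (-b) • x₂ = -(a • x₁ + b • x₂) by module] at this
      have := hstrict _ hv hneg
      obtain ⟨h1, h2⟩ := hx12p a b this
      linarith
    · rcases le_or_gt (a + b) 0 with hab | hab
      · have hμ : (0:ℝ) ≤ -(a+b) := by linarith
        have hsum : a • x₁ + b • x₂ + (-(a+b)) • x₁ ∈ C :=
          hadd _ hv _ (hcone _ hx₁C _ hμ)
        have heq : a • x₁ + b • x₂ + (-(a+b)) • x₁ = (b * (t₂ - t₁)) • w := by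
          rw [hx₁def, hx₂def]; module
        rw [heq] at hsum
        have hcoef : 0 < b * (t₂ - t₁) := by nlinarith
        have := hcone _ hsum (b * (t₂ - t₁))⁻¹ (inv_nonneg.mpr hcoef.le)
        rw [smul_smul, inv_mul_cancel₀ hcoef.ne', one_smul] at this
        exact hwC this
      · set r := (a+b)⁻¹ with hr
        have hrpos : 0 < r := inv_pos.mpr hab
        have hrv : r • (a • x₁ + b • x₂) ∈ C := hcone _ hv r hrpos.le
        have hepsilon : 0 < -(r*a) := by
          rw [neg_pos]; exact mul_neg_of_pos_of_neg hrpos haneg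
        have heq : r • (a • x₁ + b • x₂) = (1 + -(r*a)) • x₂ - (-(r*a)) • x₁ := by
          have hrb : r * b = 1 + -(r * a) := by
            rw [hr]
            field_simp
            ring
          rw [smul_add, smul_smul, smul_smul, hrb]
          module
        rw [heq] at hrv
        exact star₂ _ hepsilon hrv
  -- basis and coordinates
  have hcard : Fintype.card (Fin 2) = Module.finrank ℝ (Fin 2 → ℝ) := by simp
  set bb := basisOfLinearIndependentOfCardEqFinrank hx12 hcard with hbbdef
  have hbb : ⇑bb = ![x₁, x₂] := coe_basisOfLinearIndependentOfCardEqFinrank _ _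
  have hrepr : ∀ v : Fin 2 → ℝ, v = bb.repr v 0 • x₁ + bb.repr v 1 • x₂ := by
    intro v
    have := bb.sum_repr v
    rw [Fin.sum_univ_two, hbb] at this
    simpa using this.symm
  have htne : t₂ - t₁ ≠ 0 := by linarith
  -- u as positive combination
  set p : ℝ := t₂ / (t₂ - t₁) with hpdef
  set q : ℝ := -t₁ / (t₂ - t₁) with hqdef
  have hppos : 0 < p := div_pos ht2pos (by linarith)
  have hqpos : 0 < q := div_pos (by linarith) (by linarith)
  have hu_pq : u = p • x₁ + q • x₂ := by
    rw [hx₁def, hx₂def, hpdef, hqdef]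
    match_scalars <;> field_simp <;> ring
  -- positive combinations are interior
  have hint_mem : ∀ a b : ℝ, 0 < a → 0 < b → a • x₁ + b • x₂ ∈ interior C := by
    intro a b ha hb
    set s : ℝ := min (a/p) (b/q) with hsdef
    have hspos : 0 < s := lt_min (div_pos ha hppos) (div_pos hb hqpos)
    have hsp : s * p ≤ a := by
      have h1 : s ≤ a/p := min_le_left _ _
      calc s * p ≤ (a/p) * p := by nlinarith
        _ = a := by field_simp
    have hsq : s * q ≤ b := by
      have h1 : s ≤ b/q := min_le_right _ _
      calc s * q ≤ (b/q) * q := by nlinarith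
        _ = b := by field_simp
    set c : Fin 2 → ℝ := (a - s*p) • x₁ + (b - s*q) • x₂ with hcdef
    have hcC : c ∈ C := hK _ _ (by linarith) (by linarith)
    have hsu_int : s • u ∈ interior C := by
      have hopen : IsOpen ((fun z : Fin 2 → ℝ => s • z) '' interior C) :=
        isOpenMap_smul₀ hspos.ne' _ isOpen_interior
      have hsub : (fun z : Fin 2 → ℝ => s • z) '' interior C ⊆ C := by
        rintro _ ⟨y, hy, rfl⟩
        exact hcone y (interior_subset hy) s hspos.le
      exact interior_maximal hsub hopen ⟨u, hu, rfl⟩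
    have hv_eq : a • x₁ + b • x₂ = s • u + c := by
      rw [hcdef, hu_pq]; module
    rw [hv_eq]
    have hopen : IsOpen ((fun z : Fin 2 → ℝ => z + c) '' interior C) :=
      isOpenMap_add_right c _ isOpen_interior
    have hsub : (fun z : Fin 2 → ℝ => z + c) '' interior C ⊆ C := by
      rintro _ ⟨y, hy, rfl⟩
      exact hadd y (interior_subset hy) c hcC
    exact interior_maximal hsub hopen ⟨s • u, hsu_int, rfl⟩
  -- x₁, x₂ on the frontier
  have hx₁ni : x₁ ∉ interior C := by
    intro h
    have hcont : Continuous (fun ε : ℝ => (1+ε) • x₁ - ε • x₂) := by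
      apply Continuous.sub
      · exact (continuous_const.add continuous_id).smul continuous_const
      · exact continuous_id.smul continuous_const
    have hpre : (fun ε : ℝ => (1+ε) • x₁ - ε • x₂) ⁻¹' C ∈ nhds (0:ℝ) := by
      apply (hcont.continuousAt (x := (0:ℝ))).preimage_mem_nhds
      simp only [zero_smul, sub_zero, add_zero, one_smul]
      exact mem_interior_iff_mem_nhds.mp h
    obtain ⟨δ, hδ, hball⟩ := Metric.mem_nhds_iff.mp hpre
    have hmem : (δ/2) ∈ Metric.ball (0:ℝ) δ := by
      rw [Metric.mem_ball, Real.dist_eq, sub_zero, abs_of_pos (by linarith : (0:ℝ) < δ/2)]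
      linarith
    have h2 := hball hmem
    rw [Set.mem_preimage] at h2
    exact star₁ (δ/2) (by linarith) h2
  have hx₂ni : x₂ ∉ interior C := by
    intro h
    have hcont : Continuous (fun ε : ℝ => (1+ε) • x₂ - ε • x₁) := by
      apply Continuous.sub
      · exact (continuous_const.add continuous_id).smul continuous_const
      · exact continuous_id.smul continuous_const
    have hpre : (fun ε : ℝ => (1+ε) • x₂ - ε • x₁) ⁻¹' C ∈ nhds (0:ℝ) := by
      apply (hcont.continuousAt (x := (0:ℝ))).preimage_mem_nhds
      simp only [zero_smul, sub_zero, add_zero, one_smul]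
      exact mem_interior_iff_mem_nhds.mp h
    obtain ⟨δ, hδ, hball⟩ := Metric.mem_nhds_iff.mp hpre
    have hmem : (δ/2) ∈ Metric.ball (0:ℝ) δ := by
      rw [Metric.mem_ball, Real.dist_eq, sub_zero, abs_of_pos (by linarith : (0:ℝ) < δ/2)]
      linarith
    have h2 := hball hmem
    rw [Set.mem_preimage] at h2
    exact star₂ (δ/2) (by linarith) h2
  have hfx₁ : x₁ ∈ frontier C := by
    rw [hclosed.frontier_eq]
    exact ⟨hx₁C, hx₁ni⟩
  have hfx₂ : x₂ ∈ frontier C := by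
    rw [hclosed.frontier_eq]
    exact ⟨hx₂C, hx₂ni⟩
  -- frontier characterization
  have hfr_char : ∀ v ∈ frontier C,
      (∃ c : ℝ, 0 ≤ c ∧ v = c • x₁) ∨ (∃ c : ℝ, 0 ≤ c ∧ v = c • x₂) := by
    intro v hvf
    rw [hclosed.frontier_eq] at hvf
    obtain ⟨hvC, hvni⟩ := hvf
    set a := bb.repr v 0 with hadef
    set b := bb.repr v 1 with hbdef2
    have hv_eq : v = a • x₁ + b • x₂ := hrepr v
    have ha : 0 ≤ a := coorda a b (hv_eq ▸ hvC)
    have hb : 0 ≤ b := coordb a b (hv_eq ▸ hvC)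
    rcases eq_or_lt_of_le ha with ha0 | hapos
    · right
      exact ⟨b, hb, by rw [hv_eq, ← ha0, zero_smul, zero_add]⟩
    · rcases eq_or_lt_of_le hb with hb0 | hbpos
      · left
        exact ⟨a, ha, by rw [hv_eq, ← hb0, zero_smul, add_zero]⟩
      · exact absurd (hv_eq ▸ hint_mem a b hapos hbpos) hvni
  -- matrix setup
  set A : Matrix (Fin 2) (Fin 2) ℝ := g.map (Int.cast : ℤ → ℝ) with hAdef
  have hAdet : A.det = ((g.det : ℤ) : ℝ) := by
    rw [hAdef]
    exact (RingHom.map_det (Int.castRingHom ℝ) g).symm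
  have hdd : A.det * A.det = 1 := by
    rcases hg with h | h <;> rw [hAdet, h] <;> norm_num
  have hdet_ne : A.det ≠ 0 := by
    intro h; rw [h] at hdd; norm_num at hdd
  have hAunit : IsUnit A.det := isUnit_iff_ne_zero.mpr hdet_ne
  have hBA : A⁻¹ * A = 1 := nonsing_inv_mul A hAunit
  have hAB : A * A⁻¹ = 1 := mul_nonsing_inv A hAunit
  have hcontA : Continuous A.mulVec := by
    have := A.mulVecLin.continuous_of_finiteDimensional
    exact Continuous.matrix_mulVec continuous_const continuous_id
  have hcontB : Continuous A⁻¹.mulVec := by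
    have := (A⁻¹).mulVecLin.continuous_of_finiteDimensional
    exact Continuous.matrix_mulVec continuous_const continuous_id
  set e : (Fin 2 → ℝ) ≃ₜ (Fin 2 → ℝ) :=
    { toFun := A.mulVec
      invFun := A⁻¹.mulVec
      left_inv := fun v => by rw [Matrix.mulVec_mulVec, hBA, Matrix.one_mulVec]
      right_inv := fun v => by rw [Matrix.mulVec_mulVec, hAB, Matrix.one_mulVec]
      continuous_toFun := hcontA
      continuous_invFun := hcontB } with hedef
  have hecoe : ⇑e = A.mulVec := rfl
  have heC : ⇑e '' C = C := by rw [hecoe]; exact hpres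
  have hMfr : ∀ v ∈ frontier C, A.mulVec v ∈ frontier C := by
    intro v hv
    have h1 := e.image_frontier C
    rw [heC] at h1
    rw [← hecoe, ← h1]
    exact Set.mem_image_of_mem _ hv
  have hMinj : Function.Injective A.mulVec := by
    rw [← hecoe]; exact e.injective
  have hx₁ne0 : x₁ ≠ 0 := by have := hx12.ne_zero 0; simpa using this
  have hx₂ne0 : x₂ ≠ 0 := by have := hx12.ne_zero 1; simpa using this
  have hray : ∀ v ∈ frontier C, v ≠ 0 →
      (∃ c : ℝ, 0 < c ∧ v = c • x₁) ∨ (∃ c : ℝ, 0 < c ∧ v = c • x₂) := by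
    intro v hv hvne
    rcases hfr_char v hv with ⟨c, hc, hceq⟩ | ⟨c, hc, hceq⟩
    · left
      refine ⟨c, lt_of_le_of_ne hc ?_, hceq⟩
      intro h; apply hvne; rw [hceq, ← h, zero_smul]
    · right
      refine ⟨c, lt_of_le_of_ne hc ?_, hceq⟩
      intro h; apply hvne; rw [hceq, ← h, zero_smul]
  have hMx₁ne : A.mulVec x₁ ≠ 0 := by
    intro h; apply hx₁ne0; apply hMinj; rw [h, Matrix.mulVec_zero]
  have hMx₂ne : A.mulVec x₂ ≠ 0 := by
    intro h; apply hx₂ne0; apply hMinj; rw [h, Matrix.mulVec_zero]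
  have hMx₁ := hray _ (hMfr _ hfx₁) hMx₁ne
  have hMx₂ := hray _ (hMfr _ hfx₂) hMx₂ne
  -- the squared matrix
  set N : Matrix (Fin 2) (Fin 2) ℝ := (g ^ 2).map (Int.cast : ℤ → ℝ) with hNdef
  have hN : N = A * A := by
    rw [hNdef, hAdef, pow_two]
    exact Matrix.map_mul (f := Int.castRingHom ℝ)
  have hNdet : N.det = 1 := by rw [hN, Matrix.det_mul, hdd]
  -- impossible mixed cases helper
  have himp : ∀ c d : ℝ, 0 < c → A.mulVec x₂ = (d/c) • A.mulVec x₁ → False := by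
    intro c d hc heq
    have h2 : A.mulVec x₂ = A.mulVec ((d/c) • x₁) := by
      rw [Matrix.mulVec_smul, heq]
    have h3 : x₂ = (d/c) • x₁ := hMinj h2
    have h4 : (d/c) • x₁ + (-1 : ℝ) • x₂ = 0 := by rw [h3]; module
    have := (hx12p _ _ h4).2
    norm_num at this
  rcases hMx₁ with ⟨c, hc, hc1⟩ | ⟨c, hc, hc1⟩ <;> rcases hMx₂ with ⟨d, hd, hd1⟩ | ⟨d, hd, hd1⟩
  · -- A x₁ = c x₁, A x₂ = d x₁ : impossible
    exfalso
    apply himp c d hc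
    rw [hd1, hc1, smul_smul, div_mul_cancel₀ _ hc.ne']
  · -- A x₁ = c x₁, A x₂ = d x₂
    have hα : N.mulVec x₁ = (c*c) • x₁ := by
      rw [hN, ← Matrix.mulVec_mulVec, hc1, Matrix.mulVec_smul, hc1, smul_smul]
    have hβ : N.mulVec x₂ = (d*d) • x₂ := by
      rw [hN, ← Matrix.mulVec_mulVec, hd1, Matrix.mulVec_smul, hd1, smul_smul]
    have hprod : (c*c) * (d*d) = 1 := by
      have := det_eq_mul_of_eigen hx12 hα hβ
      rw [hNdet] at this
      linarith
    exact ⟨x₁, x₂, hx₁C, hx₂C, hfx₁, hfx₂, hx12, (c*c), (d*d),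
      mul_pos hc hc, mul_pos hd hd, hprod, hα, hβ⟩
  · -- A x₁ = c x₂, A x₂ = d x₁
    have hα : N.mulVec x₁ = (c*d) • x₁ := by
      rw [hN, ← Matrix.mulVec_mulVec, hc1, Matrix.mulVec_smul, hd1, smul_smul]
    have hβ : N.mulVec x₂ = (c*d) • x₂ := by
      rw [hN, ← Matrix.mulVec_mulVec, hd1, Matrix.mulVec_smul, hc1, smul_smul, mul_comm d c]
    have hprod : (c*d) * (c*d) = 1 := by
      have := det_eq_mul_of_eigen hx12 hα hβ
      rw [hNdet] at this
      linarith
    exact ⟨x₁, x₂, hx₁C, hx₂C, hfx₁, hfx₂, hx12, (c*d), (c*d),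
      mul_pos hc hd, mul_pos hc hd, hprod, hα, hβ⟩
  · -- A x₁ = c x₂, A x₂ = d x₂ : impossible
    exfalso
    apply himp c d hc
    rw [hd1, hc1, smul_smul, div_mul_cancel₀ _ hc.ne']
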